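/- Let G be a temporal graph, k ≥ 1 an integer, and [ts,te] a window. Suppose that (i) there exists a temporal edge e with a minimal core window [t1,t2] satisfying ts ≤ t1, t2 = te, and such that e has no minimal core window [t1',t2'] with ts ≤ t1' < t1; and (ii) there exists a temporal edge with a minimal core window [a,b] satisfying a = ts and b ≤ te. Then C_[ts,te] is nonempty and TTI(C_[ts,te]) = [ts,te]. -/

import Mathlib

variable {V : Type*} [Fintype V]

/-- A vertex set `S` is `k`-dense in `G` if every vertex of `S` has
at least `k` neighbors of `G` lying in `S`. -/
def KDense (G : SimpleGraph V) (k : ℕ) (S : Set V) : Prop :=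
  ∀ v ∈ S, k ≤ (S ∩ G.neighborSet v).ncard

/-- The `k`-core of `G`: the union of all `k`-dense vertex sets. -/
def kCore (G : SimpleGraph V) (k : ℕ) : Set V :=
  ⋃₀ {S | KDense G k S}

/-- A temporal graph on a vertex set `V`: a finite set of temporal edges
`(u, v, t)` with `u ≠ v` and integer timestamp `t`. -/
structure TemporalGraph (V : Type*) where
  E : Finset (V × V × ℤ)
  ne : ∀ e ∈ E, e.1 ≠ e.2.1

/-- The projected (snapshot) graph of `G` over the time window `[ts, te]`. -/
def TemporalGraph.proj (G : TemporalGraph V) (ts te : ℤ) : SimpleGraph V where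
  Adj u v := ∃ t, ts ≤ t ∧ t ≤ te ∧ ((u, v, t) ∈ G.E ∨ (v, u, t) ∈ G.E)
  symm := by
    constructor
    rintro u v ⟨t, h1, h2, h3⟩
    exact ⟨t, h1, h2, h3.symm⟩
  loopless := by
    constructor
    rintro u ⟨t, h1, h2, h3⟩
    rcases h3 with h | h <;> exact G.ne _ h rfl

/-- The temporal `k`-core of the window `[ts, te]`: all temporal edges with
timestamp in `[ts, te]` whose both endpoints lie in the `k`-core of the
projected graph `G_[ts,te]`. -/
def TemporalGraph.tCore (G : TemporalGraph V) (k : ℕ) (ts te : ℤ) :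
    Set (V × V × ℤ) :=
  {e | e ∈ G.E ∧ ts ≤ e.2.2 ∧ e.2.2 ≤ te ∧
    e.1 ∈ kCore (G.proj ts te) k ∧ e.2.1 ∈ kCore (G.proj ts te) k}

/-- `[t1, t2]` is a minimal core window of the temporal edge `e`:
`e` lies in the temporal `k`-core of `[t1, t2]` but in no temporal `k`-core
of a window properly contained in `[t1, t2]`. -/
def MinCoreWindow (G : TemporalGraph V) (k : ℕ) (e : V × V × ℤ)
    (t1 t2 : ℤ) : Prop :=
  e ∈ G.tCore k t1 t2 ∧
  ∀ ts' te', t1 ≤ ts' → te' ≤ t2 → (ts', te') ≠ (t1, t2) →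
    e ∉ G.tCore k ts' te'

/-- `[a, b]` is the tightest time interval of the edge set `C`:
`a` and `b` are the minimum and maximum timestamps of the edges in `C`. -/
def IsTTI (C : Set (V × V × ℤ)) (a b : ℤ) : Prop :=
  IsLeast {t | ∃ e ∈ C, e.2.2 = t} a ∧ IsGreatest {t | ∃ e ∈ C, e.2.2 = t} b

lemma subset_kCore {G : SimpleGraph V} {k : ℕ} {S : Set V} (h : KDense G k S) :
    S ⊆ kCore G k :=
  Set.subset_sUnion_of_mem h

lemma kdense_kCore (G : SimpleGraph V) (k : ℕ) : KDense G k (kCore G k) := by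
  intro v hv
  obtain ⟨S, hS, hvS⟩ := hv
  refine le_trans (hS v hvS) (Set.ncard_le_ncard ?_ (Set.toFinite _))
  exact Set.inter_subset_inter_left _ (Set.subset_sUnion_of_mem hS)

lemma proj_mono (G : TemporalGraph V) {ts te ts' te' : ℤ} (h1 : ts ≤ ts')
    (h2 : te' ≤ te) : G.proj ts' te' ≤ G.proj ts te := by
  rintro u v ⟨t, ha, hb, hc⟩
  exact ⟨t, le_trans h1 ha, le_trans hb h2, hc⟩

lemma kCore_mono {G H : SimpleGraph V} (h : G ≤ H) (k : ℕ) :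
    kCore G k ⊆ kCore H k := by
  rintro v ⟨S, hS, hvS⟩
  have hd : KDense H k S := fun w hw => le_trans (hS w hw)
    (Set.ncard_le_ncard (Set.inter_subset_inter_right _ (fun x hx => h hx))
      (Set.toFinite _))
  exact Set.subset_sUnion_of_mem hd hvS

lemma tCore_mono (G : TemporalGraph V) (k : ℕ) {ts te ts' te' : ℤ}
    (h1 : ts ≤ ts') (h2 : te' ≤ te) : G.tCore k ts' te' ⊆ G.tCore k ts te := by
  rintro e ⟨hE, ha, hb, hu, hv⟩
  exact ⟨hE, le_trans h1 ha, le_trans hb h2,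
    kCore_mono (proj_mono G h1 h2) k hu, kCore_mono (proj_mono G h1 h2) k hv⟩

/-- If every edge of the temporal core of `[a, b]` has timestamp in `[a', b']`,
then the `k`-core of the projection of `[a, b]` is `k`-dense in the
projection of `[a', b']`. -/
lemma shrink_kdense (G : TemporalGraph V) (k : ℕ) {a b a' b' : ℤ}
    (h : ∀ e ∈ G.tCore k a b, a' ≤ e.2.2 ∧ e.2.2 ≤ b') :
    KDense (G.proj a' b') k (kCore (G.proj a b) k) := by
  intro v hv
  refine le_trans (kdense_kCore (G.proj a b) k v hv)
    (Set.ncard_le_ncard ?_ (Set.toFinite _))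
  rintro w ⟨hwS, t, ht1, ht2, hE⟩
  refine ⟨hwS, t, ?_, ?_, hE⟩
  · rcases hE with hE | hE
    · exact (h (v, w, t) ⟨hE, ht1, ht2, hv, hwS⟩).1
    · exact (h (w, v, t) ⟨hE, ht1, ht2, hwS, hv⟩).1
  · rcases hE with hE | hE
    · exact (h (v, w, t) ⟨hE, ht1, ht2, hv, hwS⟩).2
    · exact (h (w, v, t) ⟨hE, ht1, ht2, hwS, hv⟩).2

theorem valid_end_time_sufficient (G : TemporalGraph V) (k : ℕ) (hk : 1 ≤ k)
    (ts te : ℤ) (hw : ts ≤ te)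
    (h1 : ∃ (e : V × V × ℤ) (t1 : ℤ), MinCoreWindow G k e t1 te ∧ ts ≤ t1 ∧
      ∀ t1' t2', MinCoreWindow G k e t1' t2' → ts ≤ t1' → ¬ t1' < t1)
    (h2 : ∃ (e : V × V × ℤ) (b : ℤ), MinCoreWindow G k e ts b ∧ b ≤ te) :
    (G.tCore k ts te).Nonempty ∧ IsTTI (G.tCore k ts te) ts te := by
  obtain ⟨e, t1, hmw, ht1, -⟩ := h1
  obtain ⟨f, b, hmwf, hb⟩ := h2
  have hf_te : f ∈ G.tCore k ts te := tCore_mono G k le_rfl hb hmwf.1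
  have he_te : e ∈ G.tCore k ts te := tCore_mono G k ht1 le_rfl hmw.1
  -- there is an edge with timestamp ts
  have hA : ∃ g ∈ G.tCore k ts te, g.2.2 = ts := by
    by_contra hA
    push_neg at hA
    have hbound : ∀ g ∈ G.tCore k ts b, ts + 1 ≤ g.2.2 ∧ g.2.2 ≤ b := by
      intro g hg
      refine ⟨?_, hg.2.2.1⟩
      have h1 := hg.2.1
      have h2 := hA g (tCore_mono G k le_rfl hb hg)
      omega
    have hdense := shrink_kdense G k hbound
    have hsub := subset_kCore hdense
    have hf1 : ts + 1 ≤ f.2.2 := (hbound f hmwf.1).1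
    have : f ∈ G.tCore k (ts + 1) b :=
      ⟨hmwf.1.1, hf1, hmwf.1.2.2.1, hsub hmwf.1.2.2.2.1, hsub hmwf.1.2.2.2.2⟩
    exact hmwf.2 (ts + 1) b (by omega) le_rfl (by simp) this
  -- there is an edge with timestamp te
  have hB : ∃ g ∈ G.tCore k ts te, g.2.2 = te := by
    by_contra hB
    push_neg at hB
    have hbound : ∀ g ∈ G.tCore k t1 te, t1 ≤ g.2.2 ∧ g.2.2 ≤ te - 1 := by
      intro g hg
      refine ⟨hg.2.1, ?_⟩
      have h1 := hg.2.2.1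
      have h2 := hB g (tCore_mono G k ht1 le_rfl hg)
      omega
    have hdense := shrink_kdense G k hbound
    have hsub := subset_kCore hdense
    have he1 : e.2.2 ≤ te - 1 := (hbound e hmw.1).2
    have : e ∈ G.tCore k t1 (te - 1) :=
      ⟨hmw.1.1, hmw.1.2.1, he1, hsub hmw.1.2.2.2.1, hsub hmw.1.2.2.2.2⟩
    exact hmw.2 t1 (te - 1) le_rfl (by omega) (by simp) this
  obtain ⟨g1, hg1, hg1t⟩ := hA
  obtain ⟨g2, hg2, hg2t⟩ := hB
  refine ⟨⟨f, hf_te⟩, ⟨⟨g1, hg1, hg1t⟩, ?_⟩, ⟨⟨g2, hg2, hg2t⟩, ?_⟩⟩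
  · rintro t ⟨g, hg, rfl⟩
    exact hg.2.1
  · rintro t ⟨g, hg, rfl⟩
    exact hg.2.2.1
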